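/- Suppose H₁ and H₂ are finite-dimensional, f has a saddle-point, the parameter conditions (PC) hold, ‖K‖·limsup_{i→∞} τ_i < 1/2 and ‖K‖·limsup_{i→∞} σ_i < 1/2, and moreover sup_{k∈ℕ} α_k < ∞, sup_{k∈ℕ} β_k < ∞, 0 < inf_{k∈ℕ} σ_k ≤ sup_{k∈ℕ} σ_k < ∞ and 0 < inf_{k∈ℕ} τ_k ≤ sup_{k∈ℕ} τ_k < ∞. Then the sequence ((x^k, y^k))_{k∈ℕ} converges (in norm) to a saddle-point of f. -/
import Mathlib
open RealInnerProductSpace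

lemma aux_inner_id {H : Type*} [NormedAddCommGroup H] [InnerProductSpace ℝ H] (a b c : H) :
    ⟪a - b, c - b⟫ = (‖b - a‖^2 + ‖b - c‖^2 - ‖a - c‖^2)/2 := by
  have h0 : a - c = (a-b) - (c-b) := by abel
  have h1 : ‖a - c‖^2 = ‖(a-b) - (c-b)‖^2 := by rw [h0]
  have h2 : ‖(a-b)-(c-b)‖^2 = ‖a-b‖^2 - 2*⟪a-b,c-b⟫ + ‖c-b‖^2 := norm_sub_sq_real _ _
  have h3 : ‖b - a‖ = ‖a - b‖ := norm_sub_rev _ _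
  have h4 : ‖b - c‖ = ‖c - b‖ := norm_sub_rev _ _
  rw [h3, h4]; linarith [h1.trans h2]

lemma aux_bound1 {H₁ H₂ : Type*} [NormedAddCommGroup H₁] [InnerProductSpace ℝ H₁]
    [NormedAddCommGroup H₂] [InnerProductSpace ℝ H₂]
    (K : H₁ →L[ℝ] H₂) (t : ℝ) (u : H₁) (v : H₂) :
    t * ⟪K u, v⟫ ≤ ‖K‖ * t^2/2 * ‖u‖^2 + ‖K‖/2 * ‖v‖^2 := by
  have h1 : |⟪K u, v⟫| ≤ ‖K u‖ * ‖v‖ := abs_real_inner_le_norm _ _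
  have h2 : ‖K u‖ ≤ ‖K‖ * ‖u‖ := K.le_opNorm u
  have hK : (0:ℝ) ≤ ‖K‖ := norm_nonneg _
  have h3 : t * ⟪K u, v⟫ ≤ |t| * (‖K u‖ * ‖v‖) := by
    calc t * ⟪K u, v⟫ ≤ |t * ⟪K u, v⟫| := le_abs_self _
    _ = |t| * |⟪K u, v⟫| := abs_mul _ _
    _ ≤ |t| * (‖K u‖ * ‖v‖) := by exact mul_le_mul_of_nonneg_left h1 (abs_nonneg t)
  have h4 : |t| * (‖K u‖ * ‖v‖) ≤ |t| * ((‖K‖*‖u‖) * ‖v‖) := by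
    apply mul_le_mul_of_nonneg_left _ (abs_nonneg t)
    exact mul_le_mul_of_nonneg_right h2 (norm_nonneg v)
  have hs : ‖K‖*|t|^2*‖u‖^2 = ‖K‖*t^2*‖u‖^2 := by rw [sq_abs]
  nlinarith [mul_nonneg (norm_nonneg K) (sq_nonneg (|t| * ‖u‖ - ‖v‖)), hs]

lemma aux_bound2 {H₁ H₂ : Type*} [NormedAddCommGroup H₁] [InnerProductSpace ℝ H₁]
    [NormedAddCommGroup H₂] [InnerProductSpace ℝ H₂]
    (K : H₁ →L[ℝ] H₂) (t : ℝ) (u : H₁) (v : H₂) :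
    t * ⟪K u, v⟫ ≤ ‖K‖/2 * ‖u‖^2 + ‖K‖ * t^2/2 * ‖v‖^2 := by
  have h1 : |⟪K u, v⟫| ≤ ‖K u‖ * ‖v‖ := abs_real_inner_le_norm _ _
  have h2 : ‖K u‖ ≤ ‖K‖ * ‖u‖ := K.le_opNorm u
  have hK : (0:ℝ) ≤ ‖K‖ := norm_nonneg _
  have h3 : t * ⟪K u, v⟫ ≤ |t| * (‖K u‖ * ‖v‖) := by
    calc t * ⟪K u, v⟫ ≤ |t * ⟪K u, v⟫| := le_abs_self _
    _ = |t| * |⟪K u, v⟫| := abs_mul _ _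
    _ ≤ |t| * (‖K u‖ * ‖v‖) := by exact mul_le_mul_of_nonneg_left h1 (abs_nonneg t)
  have h4 : |t| * (‖K u‖ * ‖v‖) ≤ |t| * ((‖K‖*‖u‖) * ‖v‖) := by
    apply mul_le_mul_of_nonneg_left _ (abs_nonneg t)
    exact mul_le_mul_of_nonneg_right h2 (norm_nonneg v)
  have hs : ‖K‖*|t|^2*‖v‖^2 = ‖K‖*t^2*‖v‖^2 := by rw [sq_abs]
  nlinarith [mul_nonneg (norm_nonneg K) (sq_nonneg (‖u‖ - |t| * ‖v‖)), hs]

lemma aux_bound3 {H₁ H₂ : Type*} [NormedAddCommGroup H₁] [InnerProductSpace ℝ H₁]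
    [NormedAddCommGroup H₂] [InnerProductSpace ℝ H₂]
    (K : H₁ →L[ℝ] H₂) (t : ℝ) (u : H₁) (v : H₂) :
    t * ⟪K u, v⟫ ≤ ‖K‖ * |t|/2 * (‖u‖^2 + ‖v‖^2) := by
  have h1 : |⟪K u, v⟫| ≤ ‖K u‖ * ‖v‖ := abs_real_inner_le_norm _ _
  have h2 : ‖K u‖ ≤ ‖K‖ * ‖u‖ := K.le_opNorm u
  have hK : (0:ℝ) ≤ ‖K‖ := norm_nonneg _
  have h3 : t * ⟪K u, v⟫ ≤ |t| * (‖K u‖ * ‖v‖) := by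
    calc t * ⟪K u, v⟫ ≤ |t * ⟪K u, v⟫| := le_abs_self _
    _ = |t| * |⟪K u, v⟫| := abs_mul _ _
    _ ≤ |t| * (‖K u‖ * ‖v‖) := by exact mul_le_mul_of_nonneg_left h1 (abs_nonneg t)
  have h4 : |t| * (‖K u‖ * ‖v‖) ≤ |t| * ((‖K‖*‖u‖) * ‖v‖) := by
    apply mul_le_mul_of_nonneg_left _ (abs_nonneg t)
    exact mul_le_mul_of_nonneg_right h2 (norm_nonneg v)
  nlinarith [mul_nonneg (mul_nonneg (norm_nonneg K) (abs_nonneg t)) (sq_nonneg (‖u‖ - ‖v‖))]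


open Filter

lemma key_step {H₁ : Type*} [NormedAddCommGroup H₁] [InnerProductSpace ℝ H₁] [CompleteSpace H₁]
    {H₂ : Type*} [NormedAddCommGroup H₂] [InnerProductSpace ℝ H₂] [CompleteSpace H₂]
    (X : Set H₁) (Y : Set H₂)
    (K : H₁ →L[ℝ] H₂) (g : H₁ → ℝ) (h : H₂ → ℝ)
    (xs : ℕ → H₁) (ys : ℕ → H₂)
    (τs σs : ℕ → ℝ) (hτ : ∀ k, 0 < τs k) (hσ : ∀ k, 0 < σs k)
    (αs βs : ℕ → ℝ) (hα : ∀ k, 0 ≤ αs k)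
    (xbs : ℕ → H₁) (ybs : ℕ → H₂)
    (d : ℕ → H₁) (hd0 : d 0 = 0) (hdS : ∀ k, d (k+1) = xs (k+1) - xs k)
    (hxb : ∀ k, xbs k = xs k + αs k • d k)
    (hybS : ∀ k, ybs (k+1) = ys (k+1) + βs k • (ys (k+1) - ys k))
    (hiterx : ∀ k, ∀ x ∈ X,
      ⟪(τs k)⁻¹ • (xs k - xs (k+1)) - (ContinuousLinearMap.adjoint K) (ybs (k+1)),
        x - xs (k+1)⟫ + g (xs (k+1)) ≤ g x)
    (hitery : ∀ k, ∀ y ∈ Y,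
      ⟪(σs k)⁻¹ • (ys k - ys (k+1)) + K (xbs k), y - ys (k+1)⟫ + h (ys (k+1)) ≤ h y)
    (hPCβ : ∀ i, ‖K‖ * (βs i)^2 = 1/(τs i) - 1/(τs (i+1)))
    (hPCα : ∀ i, ‖K‖ * (1 - αs i)^2 = 1/(σs i) - 1/(σs (i+1)))
    (p : H₁) (q : H₂) (hp : p ∈ X) (hq : q ∈ Y)
    (hpq : ∀ k, g p - g (xs (k+1)) + h q - h (ys (k+1)) ≤ ⟪K (xs (k+1)), q⟫ - ⟪K p, ys (k+1)⟫)
    (k : ℕ) :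
    (τs (k+1))⁻¹/2 * ‖xs (k+1) - p‖^2 + (σs (k+1))⁻¹/2 * ‖ys (k+1) - q‖^2
      + ⟪K (d (k+1)), ys (k+1) - q⟫
      + (τs k)⁻¹/2 * ‖d (k+1)‖^2
      + ((σs k)⁻¹/2 - ‖K‖*(1 + αs k + |1 - αs k|)/2) * ‖ys (k+1) - ys k‖^2
    ≤ (τs k)⁻¹/2 * ‖xs k - p‖^2 + (σs k)⁻¹/2 * ‖ys k - q‖^2
      + ⟪K (d k), ys k - q⟫ + ‖K‖*(1 + αs k + |1 - αs k|)/2 * ‖d k‖^2 := by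
  have h1 := hiterx k p hp
  have h2 := hitery k q hq
  have h3 := hpq k
  rw [inner_sub_left, real_inner_smul_left, ContinuousLinearMap.adjoint_inner_left] at h1
  have hcomm : ⟪ybs (k+1), K (p - xs (k+1))⟫ = ⟪K (p - xs (k+1)), ybs (k+1)⟫ :=
    real_inner_comm _ _
  rw [hcomm] at h1
  rw [inner_add_left, real_inner_smul_left] at h2
  -- identities for the proximal terms
  have hidx : (τs k)⁻¹ * ⟪xs k - xs (k+1), p - xs (k+1)⟫
      = (τs k)⁻¹/2 * ‖d (k+1)‖^2 + (τs k)⁻¹/2 * ‖xs (k+1) - p‖^2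
        - (τs k)⁻¹/2 * ‖xs k - p‖^2 := by
    rw [aux_inner_id (xs k) (xs (k+1)) p, hdS k]; ring
  have hidy : (σs k)⁻¹ * ⟪ys k - ys (k+1), q - ys (k+1)⟫
      = (σs k)⁻¹/2 * ‖ys (k+1) - ys k‖^2 + (σs k)⁻¹/2 * ‖ys (k+1) - q‖^2
        - (σs k)⁻¹/2 * ‖ys k - q‖^2 := by
    rw [aux_inner_id (ys k) (ys (k+1)) q]; ring
  -- cross-term identity
  have hcross : ⟪K (p - xs (k+1)), ybs (k+1)⟫ - ⟪K (xbs k), q - ys (k+1)⟫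
      + (⟪K (xs (k+1)), q⟫ - ⟪K p, ys (k+1)⟫)
      = -⟪K (d (k+1)), ys (k+1) - q⟫ + ⟪K (d k), ys k - q⟫
        + (αs k - 1) * ⟪K (d k), ys (k+1) - q⟫
        + (1 - αs k) * ⟪K (d k), ys (k+1) - ys k⟫
        + αs k * ⟪K (d k), ys (k+1) - ys k⟫
        + βs k * ⟪K (p - xs (k+1)), ys (k+1) - ys k⟫ := by
    rw [hybS k, hxb k, hdS k]
    simp only [map_add, map_sub, map_smul, inner_add_left, inner_sub_left,
      inner_add_right, inner_sub_right, real_inner_smul_left, real_inner_smul_right]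
    ring
  -- bounds for the error terms
  have hb1 := aux_bound1 K (βs k) (p - xs (k+1)) (ys (k+1) - ys k)
  rw [norm_sub_rev p] at hb1
  have hb2 := aux_bound2 K (αs k - 1) (d k) (ys (k+1) - q)
  rw [show (αs k - 1)^2 = (1 - αs k)^2 from by ring] at hb2
  have hb3 := aux_bound3 K (1 - αs k) (d k) (ys (k+1) - ys k)
  have hb4 := aux_bound3 K (αs k) (d k) (ys (k+1) - ys k)
  rw [abs_of_nonneg (hα k)] at hb4
  -- step-size identities
  have hPC1 : ‖K‖ * (βs k)^2/2 * ‖xs (k+1) - p‖^2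
      = ((τs k)⁻¹ - (τs (k+1))⁻¹)/2 * ‖xs (k+1) - p‖^2 := by
    rw [hPCβ k, one_div, one_div]
  have hPC2 : ‖K‖ * (1 - αs k)^2/2 * ‖ys (k+1) - q‖^2
      = ((σs k)⁻¹ - (σs (k+1))⁻¹)/2 * ‖ys (k+1) - q‖^2 := by
    rw [hPCα k, one_div, one_div]
  linarith [h1, h2, h3, hcross, hidx, hidy, hb1, hb2, hb3, hb4, hPC1, hPC2]


set_option maxHeartbeats 4000000 in
theorem stmt_19
    {H₁ : Type*} [NormedAddCommGroup H₁] [InnerProductSpace ℝ H₁] [CompleteSpace H₁] [FiniteDimensional ℝ H₁]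
    {H₂ : Type*} [NormedAddCommGroup H₂] [InnerProductSpace ℝ H₂] [CompleteSpace H₂] [FiniteDimensional ℝ H₂]
    (X : Set H₁) (Y : Set H₂)
    (hXne : X.Nonempty) (hXcl : IsClosed X) (hXcv : Convex ℝ X)
    (hYne : Y.Nonempty) (hYcl : IsClosed Y) (hYcv : Convex ℝ Y)
    (K : H₁ →L[ℝ] H₂) (g : H₁ → ℝ) (h : H₂ → ℝ)
    (hg : ConvexOn ℝ Set.univ g) (hglsc : LowerSemicontinuous g)
    (hh : ConvexOn ℝ Set.univ h) (hhlsc : LowerSemicontinuous h)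
    (f : H₁ → H₂ → ℝ)
    (hf : ∀ x y, f x y = ⟪K x, y⟫ + g x - h y)
    (xs : ℕ → H₁) (ys : ℕ → H₂) (hxX : ∀ k, xs k ∈ X) (hyY : ∀ k, ys k ∈ Y)
    (τs σs : ℕ → ℝ) (hτ : ∀ k, 0 < τs k) (hσ : ∀ k, 0 < σs k)
    (αs βs : ℕ → ℝ) (hα : ∀ k, 0 ≤ αs k) (hβ : ∀ k, 0 ≤ βs k)
    (xbs : ℕ → H₁) (ybs : ℕ → H₂)
    (hxb0 : xbs 0 = xs 0)
    (hxbS : ∀ k, xbs (k+1) = xs (k+1) + αs (k+1) • (xs (k+1) - xs k))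
    (hyb0 : ybs 0 = ys 0)
    (hybS : ∀ k, ybs (k+1) = ys (k+1) + βs k • (ys (k+1) - ys k))
    (hiterx : ∀ k, ∀ x ∈ X,
      ⟪(τs k)⁻¹ • (xs k - xs (k+1)) - (ContinuousLinearMap.adjoint K) (ybs (k+1)),
        x - xs (k+1)⟫ + g (xs (k+1)) ≤ g x)
    (hitery : ∀ k, ∀ y ∈ Y,
      ⟪(σs k)⁻¹ • (ys k - ys (k+1)) + K (xbs k), y - ys (k+1)⟫ + h (ys (k+1)) ≤ h y)
    (hPCβ : ∀ i, ‖K‖ * (βs i)^2 = 1/(τs i) - 1/(τs (i+1)))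
    (hPCα : ∀ i, ‖K‖ * (1 - αs i)^2 = 1/(σs i) - 1/(σs (i+1)))
    (hexists : ∃ (xstar : H₁) (ystar : H₂), xstar ∈ X ∧ ystar ∈ Y ∧
      ∀ x ∈ X, ∀ y ∈ Y, f xstar y ≤ f xstar ystar ∧ f xstar ystar ≤ f x ystar)
    (hKτ : ‖K‖ * Filter.limsup τs Filter.atTop < 1/2)
    (hKσ : ‖K‖ * Filter.limsup σs Filter.atTop < 1/2)
    (hαbdd : BddAbove (Set.range αs)) (hβbdd : BddAbove (Set.range βs))
    (hσinf : 0 < ⨅ k, σs k) (hσbdd : BddAbove (Set.range σs))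
    (hτinf : 0 < ⨅ k, τs k) (hτbdd : BddAbove (Set.range τs)) :
    ∃ (xstar : H₁) (ystar : H₂),
      (xstar ∈ X ∧ ystar ∈ Y ∧
        ∀ x ∈ X, ∀ y ∈ Y, f xstar y ≤ f xstar ystar ∧ f xstar ystar ≤ f x ystar) ∧
      Filter.Tendsto (fun k => (xs k, ys k)) Filter.atTop (nhds (xstar, ystar)) := by
  obtain ⟨x₀, y₀, hx₀X, hy₀Y, hsad₀⟩ := hexists
  have hK : (0:ℝ) ≤ ‖K‖ := norm_nonneg _
  -- increments
  set d : ℕ → H₁ := fun k => Nat.casesOn k 0 (fun j => xs (j+1) - xs j) with hd_def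
  have hd0 : d 0 = 0 := rfl
  have hdS : ∀ k, d (k+1) = xs (k+1) - xs k := fun k => rfl
  have hxb : ∀ k, xbs k = xs k + αs k • d k := by
    intro k
    cases k with
    | zero => rw [hxb0, hd0, smul_zero, add_zero]
    | succ j => rw [hxbS j, hdS j]
  -- a convenient inverse-monotonicity helper
  have hinv : ∀ a b : ℝ, 0 < a → a ≤ b → b⁻¹ ≤ a⁻¹ := by
    intro a b ha hab
    have hb : 0 < b := lt_of_lt_of_le ha hab
    rw [← one_div, ← one_div, div_le_div_iff₀ hb ha]
    linarith only [hab]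
  -- monotonicity of step sizes
  have hτmono : Monotone τs := by
    apply monotone_nat_of_le_succ
    intro k
    have h1 : 0 ≤ 1/(τs k) - 1/(τs (k+1)) := (hPCβ k) ▸ mul_nonneg hK (sq_nonneg _)
    have h2 : 1/(τs (k+1)) ≤ 1/(τs k) := by linarith only [h1]
    rw [div_le_div_iff₀ (hτ (k+1)) (hτ k)] at h2; linarith only [h2]
  have hσmono : Monotone σs := by
    apply monotone_nat_of_le_succ
    intro k
    have h1 : 0 ≤ 1/(σs k) - 1/(σs (k+1)) := (hPCα k) ▸ mul_nonneg hK (sq_nonneg _)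
    have h2 : 1/(σs (k+1)) ≤ 1/(σs k) := by linarith only [h1]
    rw [div_le_div_iff₀ (hσ (k+1)) (hσ k)] at h2; linarith only [h2]
  -- suprema of step sizes
  set Sτ := sSup (Set.range τs) with hSτ_def
  set Sσ := sSup (Set.range σs) with hSσ_def
  have hτS : ∀ k, τs k ≤ Sτ := fun k => le_csSup hτbdd ⟨k, rfl⟩
  have hσS : ∀ k, σs k ≤ Sσ := fun k => le_csSup hσbdd ⟨k, rfl⟩
  have hSτpos : 0 < Sτ := lt_of_lt_of_le (hτ 0) (hτS 0)
  have hSσpos : 0 < Sσ := lt_of_lt_of_le (hσ 0) (hσS 0)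
  have hKSτ : ‖K‖ * Sτ < 1/2 := by
    have hls : ∀ k, τs k ≤ Filter.limsup τs Filter.atTop := by
      intro k
      apply Filter.le_limsup_of_frequently_le
      · exact ((eventually_ge_atTop k).mono (fun n hn => hτmono hn)).frequently
      · exact ⟨Sτ, eventually_map.2 (Filter.Eventually.of_forall hτS)⟩
    have hle : Sτ ≤ Filter.limsup τs Filter.atTop :=
      csSup_le (Set.range_nonempty _) (by rintro _ ⟨k, rfl⟩; exact hls k)
    calc ‖K‖ * Sτ ≤ ‖K‖ * Filter.limsup τs Filter.atTop := mul_le_mul_of_nonneg_left hle hK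
    _ < 1/2 := hKτ
  have hKSσ : ‖K‖ * Sσ < 1/2 := by
    have hls : ∀ k, σs k ≤ Filter.limsup σs Filter.atTop := by
      intro k
      apply Filter.le_limsup_of_frequently_le
      · exact ((eventually_ge_atTop k).mono (fun n hn => hσmono hn)).frequently
      · exact ⟨Sσ, eventually_map.2 (Filter.Eventually.of_forall hσS)⟩
    have hle : Sσ ≤ Filter.limsup σs Filter.atTop :=
      csSup_le (Set.range_nonempty _) (by rintro _ ⟨k, rfl⟩; exact hls k)
    calc ‖K‖ * Sσ ≤ ‖K‖ * Filter.limsup σs Filter.atTop := mul_le_mul_of_nonneg_left hle hK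
    _ < 1/2 := hKσ
  -- threshold
  set θ := min ((2*Sσ)⁻¹) ((2*Sτ)⁻¹) with hθ_def
  have hKθσ : ‖K‖ < (2*Sσ)⁻¹ := by
    rw [inv_eq_one_div, lt_div_iff₀ (mul_pos two_pos hSσpos)]; linarith only [hKSσ]
  have hKθτ : ‖K‖ < (2*Sτ)⁻¹ := by
    rw [inv_eq_one_div, lt_div_iff₀ (mul_pos two_pos hSτpos)]; linarith only [hKSτ]
  have hKθ : ‖K‖ < θ := lt_min hKθσ hKθτ
  have hθpos : 0 < θ := lt_of_le_of_lt hK hKθ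
  have hcoefσ : ∀ k, θ ≤ (σs k)⁻¹/2 := by
    intro k
    have h1 : (2*Sσ)⁻¹ ≤ (2*σs k)⁻¹ := hinv _ _ (mul_pos two_pos (hσ k)) (by linarith only [hσS k])
    have h2 : (2*σs k)⁻¹ = (σs k)⁻¹/2 := by rw [mul_inv]; ring
    calc θ ≤ (2*Sσ)⁻¹ := min_le_left _ _
    _ ≤ (2*σs k)⁻¹ := h1
    _ = (σs k)⁻¹/2 := h2
  have hcoefτ : ∀ k, θ ≤ (τs k)⁻¹/2 := by
    intro k
    have h1 : (2*Sτ)⁻¹ ≤ (2*τs k)⁻¹ := hinv _ _ (mul_pos two_pos (hτ k)) (by linarith only [hτS k])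
    have h2 : (2*τs k)⁻¹ = (τs k)⁻¹/2 := by rw [mul_inv]; ring
    calc θ ≤ (2*Sτ)⁻¹ := min_le_right _ _
    _ ≤ (2*τs k)⁻¹ := h1
    _ = (τs k)⁻¹/2 := h2
  -- the error coefficient and its limit
  set c : ℕ → ℝ := fun k => ‖K‖*(1 + αs k + |1 - αs k|)/2 with hc_def
  have htendc : Filter.Tendsto c Filter.atTop (nhds ‖K‖) := by
    by_cases hK0 : ‖K‖ = 0
    · have : c = fun _ => 0 := by funext k; simp [hc_def, hK0]
      rw [this, hK0]; exact tendsto_const_nhds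
    have hKpos : 0 < ‖K‖ := lt_of_le_of_ne hK (Ne.symm hK0)
    have hsum : Summable (fun i => ‖K‖ * (1 - αs i)^2) := by
      apply summable_of_sum_range_le (c := 1/(σs 0)) (fun i => mul_nonneg hK (sq_nonneg _))
      intro n
      have e : ∑ i ∈ Finset.range n, ‖K‖ * (1 - αs i)^2
          = ∑ i ∈ Finset.range n, (1/(σs i) - 1/(σs (i+1))) :=
        Finset.sum_congr rfl (fun i _ => hPCα i)
      rw [e, Finset.sum_range_sub' (fun i => 1/(σs i))]
      have h1 : 0 < 1/(σs n) := one_div_pos.2 (hσ n)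
      linarith only [h1]
    have ht0 : Filter.Tendsto (fun i => ‖K‖ * (1 - αs i)^2) Filter.atTop (nhds 0) :=
      hsum.tendsto_atTop_zero
    have ht1 : Filter.Tendsto (fun i => (1 - αs i)^2) Filter.atTop (nhds 0) := by
      have := ht0.const_mul (‖K‖⁻¹)
      simp only [mul_zero] at this
      convert this using 2 with i
      field_simp
    have ht2 : Filter.Tendsto (fun i => |1 - αs i|) Filter.atTop (nhds 0) := by
      have h2 := (Real.continuous_sqrt.tendsto 0).comp ht1
      simp only [Function.comp_def, Real.sqrt_sq_eq_abs, Real.sqrt_zero] at h2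
      exact h2
    have ht4 : Filter.Tendsto αs Filter.atTop (nhds 1) := by
      have ht3 : Filter.Tendsto (fun i => 1 - αs i) Filter.atTop (nhds 0) :=
        (tendsto_zero_iff_abs_tendsto_zero _).2 ht2
      have h5 := Filter.Tendsto.sub
        (tendsto_const_nhds : Filter.Tendsto (fun _ : ℕ => (1:ℝ)) Filter.atTop (nhds 1)) ht3
      have e : (fun x => 1 - (1 - αs x)) = αs := by funext x; ring
      rw [e] at h5
      simpa using h5
    have h6 : Filter.Tendsto c Filter.atTop (nhds (‖K‖ * (1 + 1 + 0)/2)) :=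
      ((tendsto_const_nhds.mul ((tendsto_const_nhds.add ht4).add ht2)).div_const 2)
    have e2 : ‖K‖ * (1 + 1 + 0)/2 = ‖K‖ := by ring
    rw [e2] at h6; exact h6
  -- choose the uniform margin
  set cbar := (‖K‖ + θ)/2 with hcbar_def
  set δ := (θ - ‖K‖)/2 with hδ_def
  have hδpos : 0 < δ := by rw [hδ_def]; linarith only [hKθ]
  have hcbarK : ‖K‖ ≤ cbar := by rw [hcbar_def]; linarith only [hKθ]
  have hcbarθ : cbar + δ = θ := by rw [hcbar_def, hδ_def]; ring
  obtain ⟨N₀, hN₀⟩ : ∃ N₀, ∀ k, N₀ ≤ k → c k ≤ cbar := by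
    have hlt : ‖K‖ < cbar := by rw [hcbar_def]; linarith only [hKθ]
    have := htendc.eventually (eventually_lt_nhds hlt)
    obtain ⟨N₀, hN₀⟩ := eventually_atTop.1 this
    exact ⟨N₀, fun k hk => le_of_lt (hN₀ k hk)⟩
  -- the Lyapunov function
  set G : H₁ → H₂ → ℕ → ℝ := fun p q k =>
    (τs k)⁻¹/2 * ‖xs k - p‖^2 + (σs k)⁻¹/2 * ‖ys k - q‖^2
      + ⟪K (d k), ys k - q⟫ + cbar * ‖d k‖^2 with hG_def
  set μ := min ((2*Sτ)⁻¹) ((2*Sσ)⁻¹ - ‖K‖/2) with hμ_def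
  have hμpos : 0 < μ := by
    apply lt_min (inv_pos.2 (mul_pos two_pos hSτpos))
    linarith only [hKθσ, hK]
  -- lower bound for G
  have hlow : ∀ (p : H₁) (q : H₂) (k : ℕ),
      μ * (‖xs k - p‖^2 + ‖ys k - q‖^2) ≤ G p q k := by
    intro p q k
    have i1 : (-1 : ℝ) * ⟪K (d k), ys k - q⟫ ≤ ‖K‖ * |(-1:ℝ)|/2 * (‖d k‖^2 + ‖ys k - q‖^2) :=
      aux_bound3 K (-1) (d k) (ys k - q)
    rw [abs_neg, abs_one] at i1
    have i2 : (2*Sτ)⁻¹ * ‖xs k - p‖^2 ≤ (τs k)⁻¹/2 * ‖xs k - p‖^2 := by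
      apply mul_le_mul_of_nonneg_right _ (sq_nonneg _)
      have h1 : (2*Sτ)⁻¹ ≤ (2*τs k)⁻¹ := hinv _ _ (mul_pos two_pos (hτ k)) (by linarith only [hτS k])
      have h2 : (2*τs k)⁻¹ = (τs k)⁻¹/2 := by rw [mul_inv]; ring
      linarith only [h1, h2]
    have i3 : (2*Sσ)⁻¹ * ‖ys k - q‖^2 ≤ (σs k)⁻¹/2 * ‖ys k - q‖^2 := by
      apply mul_le_mul_of_nonneg_right _ (sq_nonneg _)
      have h1 : (2*Sσ)⁻¹ ≤ (2*σs k)⁻¹ := hinv _ _ (mul_pos two_pos (hσ k)) (by linarith only [hσS k])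
      have h2 : (2*σs k)⁻¹ = (σs k)⁻¹/2 := by rw [mul_inv]; ring
      linarith only [h1, h2]
    have i4 : 0 ≤ (cbar - ‖K‖/2) * ‖d k‖^2 :=
      mul_nonneg (by linarith only [hcbarK, hK]) (sq_nonneg _)
    have i5 : μ * ‖xs k - p‖^2 ≤ (2*Sτ)⁻¹ * ‖xs k - p‖^2 :=
      mul_le_mul_of_nonneg_right (min_le_left _ _) (sq_nonneg _)
    have i6 : μ * ‖ys k - q‖^2 ≤ ((2*Sσ)⁻¹ - ‖K‖/2) * ‖ys k - q‖^2 :=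
      mul_le_mul_of_nonneg_right (min_le_right _ _) (sq_nonneg _)
    simp only [hG_def]
    linarith only [i1, i2, i3, i4, i5, i6]
  -- the one-step decrease of G
  have hdec : ∀ (p : H₁) (q : H₂), p ∈ X → q ∈ Y →
      (∀ k, g p - g (xs (k+1)) + h q - h (ys (k+1))
          ≤ ⟪K (xs (k+1)), q⟫ - ⟪K p, ys (k+1)⟫) →
      ∀ k, N₀ ≤ k →
        G p q (k+1) + δ * (‖d (k+1)‖^2 + ‖ys (k+1) - ys k‖^2) ≤ G p q k := by
    intro p q hp hq hpq k hk
    have key := key_step X Y K g h xs ys τs σs hτ hσ αs βs hα xbs ybs d hd0 hdS hxb hybS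
      hiterx hitery hPCβ hPCα p q hp hq hpq k
    have hck : c k ≤ cbar := hN₀ k hk
    have hc0 : 0 ≤ c k := by
      have : 0 ≤ 1 + αs k + |1 - αs k| := by
        linarith only [hα k, abs_nonneg (1 - αs k)]
      exact div_nonneg (mul_nonneg hK this) (by norm_num)
    have m1 : (cbar + δ - (τs k)⁻¹/2) * ‖d (k+1)‖^2 ≤ 0 := by
      apply mul_nonpos_of_nonpos_of_nonneg _ (sq_nonneg _)
      have h5 := hcoefτ k; linarith only [h5, hcbarθ]
    have m2 : (c k + δ - (σs k)⁻¹/2) * ‖ys (k+1) - ys k‖^2 ≤ 0 := by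
      apply mul_nonpos_of_nonpos_of_nonneg _ (sq_nonneg _)
      have h5 := hcoefσ k; linarith only [h5, hcbarθ, hck]
    have m3 : c k * ‖d k‖^2 ≤ cbar * ‖d k‖^2 :=
      mul_le_mul_of_nonneg_right hck (sq_nonneg _)
    simp only [hG_def]
    simp only [hc_def] at key m2 m3
    linarith only [key, m1, m2, m3]
  -- the monotonicity along the tail
  have hchain : ∀ (p : H₁) (q : H₂), p ∈ X → q ∈ Y →
      (∀ k, g p - g (xs (k+1)) + h q - h (ys (k+1))
          ≤ ⟪K (xs (k+1)), q⟫ - ⟪K p, ys (k+1)⟫) →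
      ∀ m n, N₀ ≤ m → m ≤ n → G p q n ≤ G p q m := by
    intro p q hp hq hpq m n hm hmn
    induction n, hmn using Nat.le_induction with
    | base => exact le_refl _
    | succ n hmn ih =>
      have h1 := hdec p q hp hq hpq n (le_trans hm hmn)
      have h2 : 0 ≤ δ * (‖d (n+1)‖^2 + ‖ys (n+1) - ys n‖^2) :=
        mul_nonneg (le_of_lt hδpos) (by positivity)
      linarith only [h1, h2, ih]
  -- the saddle condition for (x₀, y₀)
  have hpq₀ : ∀ k, g x₀ - g (xs (k+1)) + h y₀ - h (ys (k+1))
      ≤ ⟪K (xs (k+1)), y₀⟫ - ⟪K x₀, ys (k+1)⟫ := by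
    intro k
    obtain ⟨h1, h2⟩ := hsad₀ (xs (k+1)) (hxX _) (ys (k+1)) (hyY _)
    rw [hf, hf] at h1 h2
    linarith only [h1, h2]
  have hG₀nonneg : ∀ k, 0 ≤ G x₀ y₀ k := by
    intro k
    have h5 := hlow x₀ y₀ k
    have h6 := mul_nonneg (le_of_lt hμpos)
      (add_nonneg (sq_nonneg ‖xs k - x₀‖) (sq_nonneg ‖ys k - y₀‖))
    linarith only [h5, h6]
  -- summability of the residuals
  have hsumres : Summable (fun k => ‖d (k+1)‖^2 + ‖ys (k+1) - ys k‖^2) := by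
    rw [← summable_nat_add_iff N₀]
    apply summable_of_sum_range_le (c := G x₀ y₀ N₀ / δ)
      (fun i => add_nonneg (sq_nonneg _) (sq_nonneg _))
    intro n
    have hsum : ∀ n, G x₀ y₀ (N₀ + n)
        + ∑ j ∈ Finset.range n, δ * (‖d (N₀ + j + 1)‖^2 + ‖ys (N₀ + j + 1) - ys (N₀ + j)‖^2)
        ≤ G x₀ y₀ N₀ := by
      intro n
      induction n with
      | zero => simp
      | succ n ih =>
        have h1 := hdec x₀ y₀ hx₀X hy₀Y hpq₀ (N₀ + n) (Nat.le_add_right _ _)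
        rw [Finset.sum_range_succ]
        have e : N₀ + (n+1) = (N₀ + n) + 1 := by ring
        rw [e]
        linarith only [h1, ih]
    have h2 := hsum n
    have h3 := hG₀nonneg (N₀ + n)
    rw [le_div_iff₀ hδpos]
    have e : (∑ j ∈ Finset.range n, (‖d (j + N₀ + 1)‖^2 + ‖ys (j + N₀ + 1) - ys (j + N₀)‖^2)) * δ
        = ∑ j ∈ Finset.range n, δ * (‖d (N₀ + j + 1)‖^2 + ‖ys (N₀ + j + 1) - ys (N₀ + j)‖^2) := by
      rw [Finset.sum_mul]
      exact Finset.sum_congr rfl (fun j _ => by rw [add_comm j N₀]; ring)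
    rw [e]
    linarith only [h2, h3]
  have hres0 : Filter.Tendsto (fun k => ‖d (k+1)‖^2 + ‖ys (k+1) - ys k‖^2)
      Filter.atTop (nhds 0) := hsumres.tendsto_atTop_zero
  have hd1sq : Filter.Tendsto (fun k => ‖d (k+1)‖^2) Filter.atTop (nhds 0) :=
    squeeze_zero (fun k => sq_nonneg _) (fun k => by linarith only [sq_nonneg ‖ys (k+1) - ys k‖]) hres0
  have hesq : Filter.Tendsto (fun k => ‖ys (k+1) - ys k‖^2) Filter.atTop (nhds 0) :=
    squeeze_zero (fun k => sq_nonneg _) (fun k => by linarith only [sq_nonneg ‖d (k+1)‖]) hres0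
  have hsq_to_norm1 : ∀ (v : ℕ → H₁),
      Filter.Tendsto (fun k => ‖v k‖^2) Filter.atTop (nhds 0) →
      Filter.Tendsto v Filter.atTop (nhds 0) := by
    intro v hv
    rw [tendsto_zero_iff_norm_tendsto_zero]
    have h1 := (Real.continuous_sqrt.tendsto 0).comp hv
    simp only [Function.comp_def, Real.sqrt_zero] at h1
    have e : (fun k => Real.sqrt (‖v k‖^2)) = fun k => ‖v k‖ := by
      funext k; exact Real.sqrt_sq (norm_nonneg _)
    rwa [e] at h1
  have hsq_to_norm2 : ∀ (v : ℕ → H₂),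
      Filter.Tendsto (fun k => ‖v k‖^2) Filter.atTop (nhds 0) →
      Filter.Tendsto v Filter.atTop (nhds 0) := by
    intro v hv
    rw [tendsto_zero_iff_norm_tendsto_zero]
    have h1 := (Real.continuous_sqrt.tendsto 0).comp hv
    simp only [Function.comp_def, Real.sqrt_zero] at h1
    have e : (fun k => Real.sqrt (‖v k‖^2)) = fun k => ‖v k‖ := by
      funext k; exact Real.sqrt_sq (norm_nonneg _)
    rwa [e] at h1
  have hd1 : Filter.Tendsto (fun k => d (k+1)) Filter.atTop (nhds 0) := hsq_to_norm1 (fun k => d (k+1)) hd1sq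
  have hdall : Filter.Tendsto d Filter.atTop (nhds 0) := (tendsto_add_atTop_iff_nat 1).1 hd1
  have heall : Filter.Tendsto (fun k => ys (k+1) - ys k) Filter.atTop (nhds 0) :=
    hsq_to_norm2 (fun k => ys (k+1) - ys k) hesq
    -- boundedness of the iterate sequence
  have hGmon₀ : ∀ k, N₀ ≤ k → G x₀ y₀ k ≤ G x₀ y₀ N₀ :=
    fun k hk => hchain x₀ y₀ hx₀X hy₀Y hpq₀ N₀ k le_rfl hk
  set B := G x₀ y₀ N₀ / μ with hB_def
  have hB0 : 0 ≤ B := div_nonneg (hG₀nonneg N₀) (le_of_lt hμpos)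
  have hBk : ∀ k, N₀ ≤ k → ‖xs k - x₀‖^2 + ‖ys k - y₀‖^2 ≤ B := by
    intro k hk
    have h5 := hlow x₀ y₀ k
    have h6 := hGmon₀ k hk
    rw [hB_def, le_div_iff₀ hμpos]
    linarith only [h5, h6]
  have hsqrtB : ∀ (t : ℝ), 0 ≤ t → t^2 ≤ B → t ≤ Real.sqrt B := by
    intro t ht h5
    nlinarith [Real.sq_sqrt hB0, Real.sqrt_nonneg B, ht, h5]
  obtain ⟨Rx, hRx⟩ : ∃ R, ∀ k, ‖xs k‖ ≤ R := by
    refine ⟨max ((Finset.range (N₀+1)).sup' (by simp) (fun k => ‖xs k‖)) (‖x₀‖ + Real.sqrt B),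
      fun k => ?_⟩
    rcases le_or_gt k N₀ with hk | hk
    · exact le_trans (Finset.le_sup' (fun k => ‖xs k‖) (Finset.mem_range.2 (by omega)))
        (le_max_left _ _)
    · have h5 : ‖xs k - x₀‖^2 ≤ B := by
        linarith only [hBk k (by omega), sq_nonneg ‖ys k - y₀‖]
      have h6 : ‖xs k - x₀‖ ≤ Real.sqrt B := hsqrtB _ (norm_nonneg _) h5
      have h7 : ‖xs k‖ ≤ ‖x₀‖ + ‖xs k - x₀‖ := by
        simpa using norm_add_le x₀ (xs k - x₀)
      exact le_trans (by linarith only [h6, h7]) (le_max_right _ _)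
  obtain ⟨Ry, hRy⟩ : ∃ R, ∀ k, ‖ys k‖ ≤ R := by
    refine ⟨max ((Finset.range (N₀+1)).sup' (by simp) (fun k => ‖ys k‖)) (‖y₀‖ + Real.sqrt B),
      fun k => ?_⟩
    rcases le_or_gt k N₀ with hk | hk
    · exact le_trans (Finset.le_sup' (fun k => ‖ys k‖) (Finset.mem_range.2 (by omega)))
        (le_max_left _ _)
    · have h5 : ‖ys k - y₀‖^2 ≤ B := by
        linarith only [hBk k (by omega), sq_nonneg ‖xs k - x₀‖]
      have h6 : ‖ys k - y₀‖ ≤ Real.sqrt B := hsqrtB _ (norm_nonneg _) h5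
      have h7 : ‖ys k‖ ≤ ‖y₀‖ + ‖ys k - y₀‖ := by
        simpa using norm_add_le y₀ (ys k - y₀)
      exact le_trans (by linarith only [h6, h7]) (le_max_right _ _)
  -- extraction of a convergent subsequence
  have hcpt : IsCompact (Metric.closedBall (0 : H₁ × H₂) (max Rx Ry)) := isCompact_closedBall _ _
  have hmem : ∀ k, (xs k, ys k) ∈ Metric.closedBall (0 : H₁ × H₂) (max Rx Ry) := by
    intro k
    rw [Metric.mem_closedBall, dist_zero_right]
    have e : ‖(xs k, ys k)‖ = max ‖xs k‖ ‖ys k‖ := rfl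
    rw [e]
    exact max_le (le_trans (hRx k) (le_max_left _ _)) (le_trans (hRy k) (le_max_right _ _))
  obtain ⟨z, hzmem, φ, hφ, hzconv⟩ := hcpt.tendsto_subseq hmem
  have hxc : Filter.Tendsto (fun j => xs (φ j)) Filter.atTop (nhds z.1) :=
    (Continuous.tendsto continuous_fst z).comp hzconv
  have hyc : Filter.Tendsto (fun j => ys (φ j)) Filter.atTop (nhds z.2) :=
    (Continuous.tendsto continuous_snd z).comp hzconv
  set xh := z.1 with hxh_def
  set yh := z.2 with hyh_def
  have hxhX : xh ∈ X := hXcl.mem_of_tendsto hxc (Filter.Eventually.of_forall (fun j => hxX _))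
  have hyhY : yh ∈ Y := hYcl.mem_of_tendsto hyc (Filter.Eventually.of_forall (fun j => hyY _))
  have hφtop : Filter.Tendsto φ Filter.atTop Filter.atTop := hφ.tendsto_atTop
  have hdφ1 : Filter.Tendsto (fun j => d (φ j + 1)) Filter.atTop (nhds 0) := hd1.comp hφtop
  have hdφ : Filter.Tendsto (fun j => d (φ j)) Filter.atTop (nhds 0) := hdall.comp hφtop
  have heφ : Filter.Tendsto (fun j => ys (φ j + 1) - ys (φ j)) Filter.atTop (nhds 0) :=
    heall.comp hφtop
  have hxc1 : Filter.Tendsto (fun j => xs (φ j + 1)) Filter.atTop (nhds xh) := by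
    have e : (fun j => xs (φ j + 1)) = fun j => xs (φ j) + d (φ j + 1) := by
      funext j; rw [hdS]; abel
    rw [e]
    have := hxc.add hdφ1
    simpa using this
  have hyc1 : Filter.Tendsto (fun j => ys (φ j + 1)) Filter.atTop (nhds yh) := by
    have e : (fun j => ys (φ j + 1)) = fun j => ys (φ j) + (ys (φ j + 1) - ys (φ j)) := by
      funext j; abel
    rw [e]
    have := hyc.add heφ
    simpa using this
  -- convergence of the extrapolated sequences along the subsequence
  set Bβ := sSup (Set.range βs) with hBβ_def
  have hβS : ∀ k, βs k ≤ Bβ := fun k => le_csSup hβbdd ⟨k, rfl⟩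
  set Bα := sSup (Set.range αs) with hBα_def
  have hαS : ∀ k, αs k ≤ Bα := fun k => le_csSup hαbdd ⟨k, rfl⟩
  have hybc : Filter.Tendsto (fun j => ybs (φ j + 1)) Filter.atTop (nhds yh) := by
    have e : (fun j => ybs (φ j + 1))
        = fun j => ys (φ j + 1) + βs (φ j) • (ys (φ j + 1) - ys (φ j)) :=
      funext (fun j => hybS _)
    rw [e]
    have hβe : Filter.Tendsto (fun j => βs (φ j) • (ys (φ j + 1) - ys (φ j)))
        Filter.atTop (nhds 0) := by
      apply squeeze_zero_norm (a := fun j => Bβ * ‖ys (φ j + 1) - ys (φ j)‖)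
      · intro j
        rw [norm_smul, Real.norm_eq_abs, abs_of_nonneg (hβ _)]
        exact mul_le_mul_of_nonneg_right (hβS _) (norm_nonneg _)
      · have h5 : Filter.Tendsto (fun j => ‖ys (φ j + 1) - ys (φ j)‖) Filter.atTop (nhds 0) :=
          tendsto_zero_iff_norm_tendsto_zero.1 heφ
        have := h5.const_mul Bβ
        simpa using this
    have := hyc1.add hβe
    simpa using this
  have hxbc : Filter.Tendsto (fun j => xbs (φ j)) Filter.atTop (nhds xh) := by
    have e : (fun j => xbs (φ j)) = fun j => xs (φ j) + αs (φ j) • d (φ j) :=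
      funext (fun j => hxb _)
    rw [e]
    have hαe : Filter.Tendsto (fun j => αs (φ j) • d (φ j)) Filter.atTop (nhds 0) := by
      apply squeeze_zero_norm (a := fun j => Bα * ‖d (φ j)‖)
      · intro j
        rw [norm_smul, Real.norm_eq_abs, abs_of_nonneg (hα _)]
        exact mul_le_mul_of_nonneg_right (hαS _) (norm_nonneg _)
      · have h5 : Filter.Tendsto (fun j => ‖d (φ j)‖) Filter.atTop (nhds 0) :=
          tendsto_zero_iff_norm_tendsto_zero.1 hdφ
        have := h5.const_mul Bα
        simpa using this
    have := hxc.add hαe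
    simpa using this
  -- the variational inequality for the x-limit
  have hVI1 : ∀ x ∈ X, ⟪-((ContinuousLinearMap.adjoint K) yh), x - xh⟫ + g xh ≤ g x := by
    intro x hx
    have hw : Filter.Tendsto (fun j => (τs (φ j))⁻¹ • (xs (φ j) - xs (φ j + 1)))
        Filter.atTop (nhds 0) := by
      apply squeeze_zero_norm (a := fun j => (τs 0)⁻¹ * ‖d (φ j + 1)‖)
      · intro j
        rw [norm_smul, Real.norm_eq_abs, abs_of_nonneg (le_of_lt (inv_pos.2 (hτ _)))]
        have h5 : ‖xs (φ j) - xs (φ j + 1)‖ = ‖d (φ j + 1)‖ := by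
          rw [hdS]; exact (norm_sub_rev _ _).symm
        rw [h5]
        exact mul_le_mul_of_nonneg_right (hinv _ _ (hτ 0) (hτmono (Nat.zero_le _))) (norm_nonneg _)
      · have h5 : Filter.Tendsto (fun j => ‖d (φ j + 1)‖) Filter.atTop (nhds 0) :=
          tendsto_zero_iff_norm_tendsto_zero.1 hdφ1
        have := h5.const_mul ((τs 0)⁻¹)
        simpa using this
    have hv : Filter.Tendsto
        (fun j => (τs (φ j))⁻¹ • (xs (φ j) - xs (φ j + 1))
          - (ContinuousLinearMap.adjoint K) (ybs (φ j + 1)))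
        Filter.atTop (nhds (-((ContinuousLinearMap.adjoint K) yh))) := by
      have h1 : Filter.Tendsto (fun j => (ContinuousLinearMap.adjoint K) (ybs (φ j + 1)))
          Filter.atTop (nhds ((ContinuousLinearMap.adjoint K) yh)) :=
        (((ContinuousLinearMap.adjoint K).continuous.tendsto yh).comp hybc)
      have h2 := hw.sub h1
      rw [zero_sub] at h2
      exact h2
    have hr : Filter.Tendsto
        (fun j => g x - ⟪(τs (φ j))⁻¹ • (xs (φ j) - xs (φ j + 1))
          - (ContinuousLinearMap.adjoint K) (ybs (φ j + 1)), x - xs (φ j + 1)⟫)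
        Filter.atTop (nhds (g x - ⟪-((ContinuousLinearMap.adjoint K) yh), x - xh⟫)) :=
      tendsto_const_nhds.sub (hv.inner (tendsto_const_nhds.sub hxc1))
    have hone : ∀ j, g (xs (φ j + 1))
        ≤ g x - ⟪(τs (φ j))⁻¹ • (xs (φ j) - xs (φ j + 1))
          - (ContinuousLinearMap.adjoint K) (ybs (φ j + 1)), x - xs (φ j + 1)⟫ := by
      intro j
      have h5 := hiterx (φ j) x hx
      linarith only [h5]
    have hres : g xh ≤ g x - ⟪-((ContinuousLinearMap.adjoint K) yh), x - xh⟫ := by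
      by_contra hcon
      push_neg at hcon
      set cc := ((g x - ⟪-((ContinuousLinearMap.adjoint K) yh), x - xh⟫) + g xh)/2 with hcc
      have h1 : cc < g xh := by rw [hcc]; linarith only [hcon]
      have h2 : ∀ᶠ j in Filter.atTop, cc < g (xs (φ j + 1)) := hxc1.eventually (hglsc xh cc h1)
      have h3 : ∀ᶠ j in Filter.atTop, cc
          ≤ g x - ⟪(τs (φ j))⁻¹ • (xs (φ j) - xs (φ j + 1))
            - (ContinuousLinearMap.adjoint K) (ybs (φ j + 1)), x - xs (φ j + 1)⟫ :=
        h2.mono (fun j hj => le_trans (le_of_lt hj) (hone j))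
      have h4 := ge_of_tendsto hr h3
      rw [hcc] at h4
      linarith only [h4, hcon]
    linarith only [hres]
  -- the variational inequality for the y-limit
  have hVI2 : ∀ y ∈ Y, ⟪K xh, y - yh⟫ + h yh ≤ h y := by
    intro y hy
    have hw : Filter.Tendsto (fun j => (σs (φ j))⁻¹ • (ys (φ j) - ys (φ j + 1)))
        Filter.atTop (nhds 0) := by
      apply squeeze_zero_norm (a := fun j => (σs 0)⁻¹ * ‖ys (φ j + 1) - ys (φ j)‖)
      · intro j
        rw [norm_smul, Real.norm_eq_abs, abs_of_nonneg (le_of_lt (inv_pos.2 (hσ _)))]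
        have h5 : ‖ys (φ j) - ys (φ j + 1)‖ = ‖ys (φ j + 1) - ys (φ j)‖ := norm_sub_rev _ _
        rw [h5]
        exact mul_le_mul_of_nonneg_right (hinv _ _ (hσ 0) (hσmono (Nat.zero_le _))) (norm_nonneg _)
      · have h5 : Filter.Tendsto (fun j => ‖ys (φ j + 1) - ys (φ j)‖) Filter.atTop (nhds 0) :=
          tendsto_zero_iff_norm_tendsto_zero.1 heφ
        have := h5.const_mul ((σs 0)⁻¹)
        simpa using this
    have hv : Filter.Tendsto
        (fun j => (σs (φ j))⁻¹ • (ys (φ j) - ys (φ j + 1)) + K (xbs (φ j)))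
        Filter.atTop (nhds (K xh)) := by
      have h1 : Filter.Tendsto (fun j => K (xbs (φ j))) Filter.atTop (nhds (K xh)) :=
        ((K.continuous.tendsto xh).comp hxbc)
      have h2 := hw.add h1
      rw [zero_add] at h2
      exact h2
    have hr : Filter.Tendsto
        (fun j => h y - ⟪(σs (φ j))⁻¹ • (ys (φ j) - ys (φ j + 1)) + K (xbs (φ j)),
          y - ys (φ j + 1)⟫)
        Filter.atTop (nhds (h y - ⟪K xh, y - yh⟫)) :=
      tendsto_const_nhds.sub (hv.inner (tendsto_const_nhds.sub hyc1))
    have hone : ∀ j, h (ys (φ j + 1))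
        ≤ h y - ⟪(σs (φ j))⁻¹ • (ys (φ j) - ys (φ j + 1)) + K (xbs (φ j)), y - ys (φ j + 1)⟫ := by
      intro j
      have h5 := hitery (φ j) y hy
      linarith only [h5]
    have hres : h yh ≤ h y - ⟪K xh, y - yh⟫ := by
      by_contra hcon
      push_neg at hcon
      set cc := ((h y - ⟪K xh, y - yh⟫) + h yh)/2 with hcc
      have h1 : cc < h yh := by rw [hcc]; linarith only [hcon]
      have h2 : ∀ᶠ j in Filter.atTop, cc < h (ys (φ j + 1)) := hyc1.eventually (hhlsc yh cc h1)
      have h3 : ∀ᶠ j in Filter.atTop, cc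
          ≤ h y - ⟪(σs (φ j))⁻¹ • (ys (φ j) - ys (φ j + 1)) + K (xbs (φ j)), y - ys (φ j + 1)⟫ :=
        h2.mono (fun j hj => le_trans (le_of_lt hj) (hone j))
      have h4 := ge_of_tendsto hr h3
      rw [hcc] at h4
      linarith only [h4, hcon]
    linarith only [hres]
  -- (xh, yh) is a saddle point
  have hexp1 : ∀ x : H₁, ⟪-((ContinuousLinearMap.adjoint K) yh), x - xh⟫
      = ⟪K xh, yh⟫ - ⟪K x, yh⟫ := by
    intro x
    rw [inner_neg_left, ContinuousLinearMap.adjoint_inner_left, map_sub, inner_sub_right,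
      real_inner_comm yh (K x), real_inner_comm yh (K xh)]
    ring
  have hexp2 : ∀ y : H₂, (⟪K xh, y - yh⟫ : ℝ) = ⟪K xh, y⟫ - ⟪K xh, yh⟫ :=
    fun y => inner_sub_right _ _ _
  have hsadhat : ∀ x ∈ X, ∀ y ∈ Y, f xh y ≤ f xh yh ∧ f xh yh ≤ f x yh := by
    intro x hx y hy
    have h1 := hVI1 x hx
    have h2 := hVI2 y hy
    rw [hexp1 x] at h1
    rw [hexp2 y] at h2
    constructor
    · rw [hf, hf]; linarith only [h2]
    · rw [hf, hf]; linarith only [h1]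
  have hpqhat : ∀ k, g xh - g (xs (k+1)) + h yh - h (ys (k+1))
      ≤ ⟪K (xs (k+1)), yh⟫ - ⟪K xh, ys (k+1)⟫ := by
    intro k
    have h1 := hVI1 (xs (k+1)) (hxX _)
    have h2 := hVI2 (ys (k+1)) (hyY _)
    rw [hexp1] at h1
    rw [hexp2] at h2
    linarith only [h1, h2]
  -- the Lyapunov function for (xh, yh) converges to 0
  have hGhat0 : ∀ k, 0 ≤ G xh yh k := by
    intro k
    have h5 := hlow xh yh k
    have h6 := mul_nonneg (le_of_lt hμpos)
      (add_nonneg (sq_nonneg ‖xs k - xh‖) (sq_nonneg ‖ys k - yh‖))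
    linarith only [h5, h6]
  obtain ⟨L, hGL⟩ : ∃ L, Filter.Tendsto (fun k => G xh yh k) Filter.atTop (nhds L) := by
    have hanti : Antitone (fun n => G xh yh (n + N₀)) := by
      intro m n hmn
      exact hchain xh yh hxhX hyhY hpqhat (m + N₀) (n + N₀) (Nat.le_add_left _ _) (by omega)
    have hbdd : BddBelow (Set.range (fun n => G xh yh (n + N₀))) :=
      ⟨0, by rintro _ ⟨n, rfl⟩; exact hGhat0 _⟩
    have := tendsto_atTop_ciInf hanti hbdd
    exact ⟨_, (tendsto_add_atTop_iff_nat N₀).1 this⟩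
  have hxhsq : Filter.Tendsto (fun j => ‖xs (φ j) - xh‖^2) Filter.atTop (nhds 0) := by
    have h5 : Filter.Tendsto (fun j => ‖xs (φ j) - xh‖) Filter.atTop (nhds 0) :=
      tendsto_iff_norm_sub_tendsto_zero.1 hxc
    have := h5.mul h5
    simp only [mul_zero] at this
    have e : (fun j => ‖xs (φ j) - xh‖ * ‖xs (φ j) - xh‖) = fun j => ‖xs (φ j) - xh‖^2 := by
      funext j; ring
    rwa [e] at this
  have hyhsq : Filter.Tendsto (fun j => ‖ys (φ j) - yh‖^2) Filter.atTop (nhds 0) := by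
    have h5 : Filter.Tendsto (fun j => ‖ys (φ j) - yh‖) Filter.atTop (nhds 0) :=
      tendsto_iff_norm_sub_tendsto_zero.1 hyc
    have := h5.mul h5
    simp only [mul_zero] at this
    have e : (fun j => ‖ys (φ j) - yh‖ * ‖ys (φ j) - yh‖) = fun j => ‖ys (φ j) - yh‖^2 := by
      funext j; ring
    rwa [e] at this
  have hterm1 : Filter.Tendsto (fun j => (τs (φ j))⁻¹/2 * ‖xs (φ j) - xh‖^2)
      Filter.atTop (nhds 0) := by
    apply squeeze_zero
      (fun j => mul_nonneg (div_nonneg (inv_nonneg.2 (le_of_lt (hτ _))) (by norm_num)) (sq_nonneg _))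
      (g := fun j => (τs 0)⁻¹/2 * ‖xs (φ j) - xh‖^2)
    · intro j
      apply mul_le_mul_of_nonneg_right _ (sq_nonneg _)
      have h5 := hinv _ _ (hτ 0) (hτmono (Nat.zero_le (φ j)))
      linarith only [h5]
    · have := hxhsq.const_mul ((τs 0)⁻¹/2)
      simpa using this
  have hterm2 : Filter.Tendsto (fun j => (σs (φ j))⁻¹/2 * ‖ys (φ j) - yh‖^2)
      Filter.atTop (nhds 0) := by
    apply squeeze_zero
      (fun j => mul_nonneg (div_nonneg (inv_nonneg.2 (le_of_lt (hσ _))) (by norm_num)) (sq_nonneg _))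
      (g := fun j => (σs 0)⁻¹/2 * ‖ys (φ j) - yh‖^2)
    · intro j
      apply mul_le_mul_of_nonneg_right _ (sq_nonneg _)
      have h5 := hinv _ _ (hσ 0) (hσmono (Nat.zero_le (φ j)))
      linarith only [h5]
    · have := hyhsq.const_mul ((σs 0)⁻¹/2)
      simpa using this
  have hterm3 : Filter.Tendsto (fun j => (⟪K (d (φ j)), ys (φ j) - yh⟫ : ℝ))
      Filter.atTop (nhds 0) := by
    apply squeeze_zero_norm (a := fun j => ‖K‖ * ‖d (φ j)‖ * ‖ys (φ j) - yh‖)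
    · intro j
      rw [Real.norm_eq_abs]
      calc |(⟪K (d (φ j)), ys (φ j) - yh⟫ : ℝ)| ≤ ‖K (d (φ j))‖ * ‖ys (φ j) - yh‖ :=
            abs_real_inner_le_norm _ _
      _ ≤ ‖K‖ * ‖d (φ j)‖ * ‖ys (φ j) - yh‖ :=
            mul_le_mul_of_nonneg_right (K.le_opNorm _) (norm_nonneg _)
    · have h5 : Filter.Tendsto (fun j => ‖d (φ j)‖) Filter.atTop (nhds 0) :=
        tendsto_zero_iff_norm_tendsto_zero.1 hdφ
      have h6 : Filter.Tendsto (fun j => ‖ys (φ j) - yh‖) Filter.atTop (nhds 0) :=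
        tendsto_iff_norm_sub_tendsto_zero.1 hyc
      have := (h5.const_mul ‖K‖).mul h6
      simpa using this
  have hterm4 : Filter.Tendsto (fun j => cbar * ‖d (φ j)‖^2) Filter.atTop (nhds 0) := by
    have h5 : Filter.Tendsto (fun j => ‖d (φ j)‖) Filter.atTop (nhds 0) :=
      tendsto_zero_iff_norm_tendsto_zero.1 hdφ
    have h6 := h5.mul h5
    simp only [mul_zero] at h6
    have := h6.const_mul cbar
    have e : (fun j => cbar * (‖d (φ j)‖ * ‖d (φ j)‖)) = fun j => cbar * ‖d (φ j)‖^2 := by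
      funext j; ring
    rw [e] at this
    simpa using this
  have hsub0 : Filter.Tendsto (fun j => G xh yh (φ j)) Filter.atTop (nhds 0) := by
    have e : (fun j => G xh yh (φ j))
        = fun j => (τs (φ j))⁻¹/2 * ‖xs (φ j) - xh‖^2 + (σs (φ j))⁻¹/2 * ‖ys (φ j) - yh‖^2
          + ⟪K (d (φ j)), ys (φ j) - yh⟫ + cbar * ‖d (φ j)‖^2 := by
      funext j; simp only [hG_def]
    rw [e]
    have := ((hterm1.add hterm2).add hterm3).add hterm4
    simpa using this
  have hsubL : Filter.Tendsto (fun j => G xh yh (φ j)) Filter.atTop (nhds L) :=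
    hGL.comp hφtop
  have hL0 : L = 0 := tendsto_nhds_unique hsubL hsub0
  rw [hL0] at hGL
  -- norm convergence of the full sequence
  have hsumsq : Filter.Tendsto (fun k => ‖xs k - xh‖^2 + ‖ys k - yh‖^2)
      Filter.atTop (nhds 0) := by
    apply squeeze_zero (fun k => add_nonneg (sq_nonneg _) (sq_nonneg _))
      (g := fun k => G xh yh k / μ)
    · intro k
      rw [le_div_iff₀ hμpos]
      have h5 := hlow xh yh k
      linarith only [h5]
    · have := hGL.div_const μ
      simpa using this
  have hxlim : Filter.Tendsto xs Filter.atTop (nhds xh) := by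
    have h5 : Filter.Tendsto (fun k => ‖xs k - xh‖^2) Filter.atTop (nhds 0) :=
      squeeze_zero (fun k => sq_nonneg _)
        (fun k => by linarith only [sq_nonneg ‖ys k - yh‖]) hsumsq
    have h6 := hsq_to_norm1 (fun k => xs k - xh) h5
    exact tendsto_sub_nhds_zero_iff.1 h6
  have hylim : Filter.Tendsto ys Filter.atTop (nhds yh) := by
    have h5 : Filter.Tendsto (fun k => ‖ys k - yh‖^2) Filter.atTop (nhds 0) :=
      squeeze_zero (fun k => sq_nonneg _)
        (fun k => by linarith only [sq_nonneg ‖xs k - xh‖]) hsumsq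
    have h6 := hsq_to_norm2 (fun k => ys k - yh) h5
    exact tendsto_sub_nhds_zero_iff.1 h6
  exact ⟨xh, yh, ⟨hxhX, hyhY, hsadhat⟩, hxlim.prodMk_nhds hylim⟩
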